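/- Let α₁ : ℝ≥0 → ℝ≥0 be a class K∞ function and L > 0, and suppose that for every r ≥ 0 the integral α₃(r) := ∫_0^∞ α₁(r e^{−Ls}) ds is finite. Then α₃(0) = 0, α₃ is strictly increasing on ℝ≥0, α₃(r) ≥ α₁(r e^{−L}) for all r ≥ 0, and α₃(r) → ∞ as r → ∞. -/

import Mathlib

open scoped NNReal
open Filter

noncomputable section

/-- A class `K` function: continuous, strictly increasing, vanishing at `0`. -/
def ClassK (α : ℝ≥0 → ℝ≥0) : Prop :=
  Continuous α ∧ StrictMono α ∧ α 0 = 0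

/-- A class `K∞` function: class `K` and unbounded. -/
def ClassKInf (α : ℝ≥0 → ℝ≥0) : Prop :=
  ClassK α ∧ Tendsto α atTop atTop

/-- If `α₁` is class `K∞`, `L > 0`, and `α₃(r) = ∫_0^∞ α₁(r e^{−Ls}) ds` is finite for
every `r`, then `α₃(0) = 0`, `α₃` is strictly increasing, `α₃(r) ≥ α₁(r e^{−L})`, and
`α₃(r) → ∞` as `r → ∞`. -/
theorem lower_bound_classKInf (α₁ : ℝ≥0 → ℝ≥0) (hα₁ : ClassKInf α₁)
    (L : ℝ) (hL : 0 < L)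
    (hint : ∀ r : ℝ≥0, MeasureTheory.IntegrableOn
      (fun s : ℝ => (α₁ (r * (Real.exp (-L * s)).toNNReal) : ℝ)) (Set.Ioi (0 : ℝ)))
    (α₃ : ℝ≥0 → ℝ)
    (hα₃ : ∀ r : ℝ≥0,
      α₃ r = ∫ s in Set.Ioi (0 : ℝ), (α₁ (r * (Real.exp (-L * s)).toNNReal) : ℝ)) :
    α₃ 0 = 0 ∧ StrictMono α₃ ∧
    (∀ r : ℝ≥0, (α₁ (r * (Real.exp (-L)).toNNReal) : ℝ) ≤ α₃ r) ∧
    Tendsto α₃ atTop atTop := by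
  obtain ⟨⟨hcont, hmono, h0⟩, htop⟩ := hα₁
  set f : ℝ≥0 → ℝ → ℝ := fun r s => (α₁ (r * (Real.exp (-L * s)).toNNReal) : ℝ) with hf
  have hpos : ∀ s : ℝ, 0 < (Real.exp (-L * s)).toNNReal := fun s =>
    Real.toNNReal_pos.mpr (Real.exp_pos _)
  have hzero : α₃ 0 = 0 := by rw [hα₃]; simp [h0]
  have hbound : ∀ r : ℝ≥0, (α₁ (r * (Real.exp (-L)).toNNReal) : ℝ) ≤ α₃ r := by
    intro r
    rw [hα₃]
    have hIoc : MeasureTheory.IntegrableOn (f r) (Set.Ioc (0:ℝ) 1) :=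
      (hint r).mono_set Set.Ioc_subset_Ioi_self
    calc (α₁ (r * (Real.exp (-L)).toNNReal) : ℝ)
        = ∫ _ in Set.Ioc (0:ℝ) 1, (α₁ (r * (Real.exp (-L)).toNNReal) : ℝ) := by
          simp
      _ ≤ ∫ s in Set.Ioc (0:ℝ) 1, f r s := by
          refine MeasureTheory.setIntegral_mono_on
            ((MeasureTheory.integrableOn_const_iff).mpr (Or.inr (by simp))) hIoc
            measurableSet_Ioc ?_
          intro s hs
          have h1 : Real.exp (-L) ≤ Real.exp (-L * s) := by
            apply Real.exp_le_exp.mpr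
            nlinarith [hs.1, hs.2]
          exact_mod_cast hmono.monotone
            (mul_le_mul_right (Real.toNNReal_mono h1) r)
      _ ≤ ∫ s in Set.Ioi (0:ℝ), f r s := by
          refine MeasureTheory.setIntegral_mono_set (hint r)
            (Filter.Eventually.of_forall fun s => ?_)
            (Filter.Eventually.of_forall Set.Ioc_subset_Ioi_self)
          exact (α₁ _).coe_nonneg
  refine ⟨hzero, ?_, hbound, ?_⟩
  · intro r r' hrr'
    have hdiff : ∀ s ∈ Set.Ioi (0:ℝ), f r s < f r' s := fun s _ => by
      exact_mod_cast hmono (mul_lt_mul_of_pos_right hrr' (hpos s))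
    have hintg : MeasureTheory.IntegrableOn (fun s => f r' s - f r s) (Set.Ioi (0:ℝ)) :=
      (hint r').sub (hint r)
    have hnn : 0 ≤ᵐ[MeasureTheory.volume.restrict (Set.Ioi (0:ℝ))]
        (fun s => f r' s - f r s) :=
      (MeasureTheory.ae_restrict_iff' measurableSet_Ioi).mpr
        (Filter.Eventually.of_forall fun s hs => sub_nonneg.mpr (hdiff s hs).le)
    have hposint : 0 < ∫ s in Set.Ioi (0:ℝ), (f r' s - f r s) := by
      rw [MeasureTheory.setIntegral_pos_iff_support_of_nonneg_ae hnn hintg]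
      have hsub : Set.Ioi (0:ℝ) ⊆ Function.support (fun s => f r' s - f r s) ∩ Set.Ioi 0 :=
        fun s hs => ⟨ne_of_gt (sub_pos.mpr (hdiff s hs)), hs⟩
      refine lt_of_lt_of_le ?_ (MeasureTheory.measure_mono hsub)
      simp [Real.volume_Ioi]
    rw [MeasureTheory.integral_sub (hint r') (hint r)] at hposint
    rw [hα₃ r, hα₃ r']
    linarith
  · have hc : (0:ℝ≥0) < (Real.exp (-L)).toNNReal := Real.toNNReal_pos.mpr (Real.exp_pos _)
    have h1 : Tendsto (fun r : ℝ≥0 => r * (Real.exp (-L)).toNNReal) atTop atTop :=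
      Filter.Tendsto.atTop_mul_const hc tendsto_id
    have h2 : Tendsto (fun r : ℝ≥0 => (α₁ (r * (Real.exp (-L)).toNNReal) : ℝ)) atTop atTop :=
      (NNReal.tendsto_coe_atTop.mpr tendsto_id).comp (htop.comp h1)
    exact tendsto_atTop_mono hbound h2
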